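/- For every k ≥ 1 there exists an infinite strictly increasing sequence 1 = a₁ < a₂ < ⋯ of positive integers with a_m ≤ 2⁸ k⁴ m³ for all m, such that for every choice of integers u₁, u₂, u₃, u₄ with |u_i| ≤ k and u₁ + u₂ + u₃ + u₄ = 0, the equation u₁x₁ + u₂x₂ + u₃x₃ + u₄x₄ = 0 has only trivial solutions with x₁, x₂, x₃, x₄ ∈ {a₁, a₂, …}. -/

import Mathlib

/-- A solution `(x 0, x 1, x 2, x 3)` of `∑ u i * x i = 0` is trivial if, grouping the
indices by equal values of `x`, the sum of the coefficients `u i` in each group is `0`. -/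
def IsTrivialSol (u x : Fin 4 → ℤ) : Prop :=
  ∀ i, ∑ j ∈ Finset.univ.filter (fun j => x j = x i), u j = 0

/-- `A` is a `k`-fold Sidon set: every equation `u₁x₁ + u₂x₂ + u₃x₃ + u₄x₄ = 0` with
`|uᵢ| ≤ k` and `u₁ + u₂ + u₃ + u₄ = 0` has only trivial solutions in `A`. -/
def IsKFoldSidon (k : ℤ) (A : Set ℤ) : Prop :=
  ∀ u x : Fin 4 → ℤ, (∀ i, |u i| ≤ k) → (∑ i, u i) = 0 →
    (∀ i, x i ∈ A) → (∑ i, u i * x i) = 0 → IsTrivialSol u x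

open Finset

/-- `x` is bad for `A`: adding it would create a nontrivial solution using `x`. -/
def Bad (k : ℤ) (A : Finset ℤ) (x : ℤ) : Prop :=
  ∃ u v : Fin 4 → ℤ, (∀ i, |u i| ≤ k) ∧ (∑ i, u i) = 0 ∧
    (∀ i, v i ∈ insert x A) ∧ (∃ i, v i = x) ∧ (∑ i, u i * v i) = 0 ∧ ¬ IsTrivialSol u v

lemma bad_mono {k : ℤ} {A B : Finset ℤ} (hAB : A ⊆ B) {x : ℤ} (h : Bad k A x) :
    Bad k B x := by
  obtain ⟨u, v, h1, h2, h3, h4, h5, h6⟩ := h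
  exact ⟨u, v, h1, h2, fun i => insert_subset_insert _ hAB (h3 i), h4, h5, h6⟩

lemma sidon_insert {k : ℤ} {A : Finset ℤ} {x : ℤ} (hA : IsKFoldSidon k ↑A)
    (hx : ¬ Bad k A x) : IsKFoldSidon k ↑(insert x A : Finset ℤ) := by
  intro u v hu hsu hv hsum
  by_contra hnt
  by_cases hex : ∃ i, v i = x
  · exact hx ⟨u, v, hu, hsu, fun i => by simpa using hv i, hex, hsum, hnt⟩
  · push_neg at hex
    refine hnt (hA u v hu hsu (fun i => ?_) hsum)
    have := hv i
    simp only [coe_insert, Set.mem_insert_iff, mem_coe] at this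
    rcases this with h | h
    · exact absurd h (hex i)
    · exact h

/-- Candidate values for bad elements. -/
noncomputable def cand (k : ℤ) (A : Finset ℤ) : Finset ℤ :=
  ((Finset.Icc (-(4*k)) (4*k)) ×ˢ
      ((Finset.Icc (-k) k ×ˢ Finset.Icc (-k) k ×ˢ Finset.Icc (-k) k) ×ˢ (A ×ˢ A ×ˢ A))).image
    (fun p => (-(p.2.1.1 * p.2.2.1 + p.2.1.2.1 * p.2.2.2.1 + p.2.1.2.2 * p.2.2.2.2)) / p.1)

lemma bad_mem_cand {k : ℤ} {A : Finset ℤ} (hA : IsKFoldSidon k ↑A) (ha : (1:ℤ) ∈ A)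
    {x : ℤ} (hx : Bad k A x) : x ∈ cand k A := by
  obtain ⟨u, v, hu, hsu, hv, ⟨i₀, hi₀⟩, hsum, hnt⟩ := hx
  have hk0 : (0:ℤ) ≤ k := le_trans (abs_nonneg (u 0)) (hu 0)
  -- values other than x lie in A
  have hvA : ∀ i, v i ≠ x → v i ∈ A := by
    intro i hne
    have := hv i
    rcases mem_insert.mp this with h | h
    · exact absurd h hne
    · exact h
  -- x ∉ A
  have hxA : x ∉ A := by
    intro hmem
    refine hnt (hA u v hu hsu (fun i => ?_) hsum)
    by_cases h : v i = x
    · rw [h]; exact hmem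
    · exact hvA i h
  have hx1 : x ≠ 1 := fun h => hxA (h ▸ ha)
  set S : Finset (Fin 4) := univ.filter (fun j => v j = x) with hS
  set s : ℤ := ∑ j ∈ S, u j with hs
  -- s ≠ 0
  have hs0 : s ≠ 0 := by
    intro h0
    set v' : Fin 4 → ℤ := fun i => if v i = x then 1 else v i with hv'
    have hv'A : ∀ i, v' i ∈ (↑A : Set ℤ) := by
      intro i
      by_cases h : v i = x
      · simp only [hv', h, if_pos rfl]; simpa using ha
      · simp only [hv', if_neg h]; simpa using hvA i h
    have hsum' : ∑ i, u i * v' i = 0 := by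
      have e : ∀ i, u i * v' i = u i * v i + (if v i = x then u i * (1 - x) else 0) := by
        intro i
        by_cases h : v i = x
        · rw [if_pos h]; simp only [hv']; rw [if_pos h, h]; ring
        · rw [if_neg h]; simp only [hv']; rw [if_neg h]; ring
      calc ∑ i, u i * v' i
          = ∑ i, (u i * v i + (if v i = x then u i * (1 - x) else 0)) :=
            sum_congr rfl (fun i _ => e i)
        _ = ∑ i, u i * v i + ∑ i, (if v i = x then u i * (1 - x) else 0) := sum_add_distrib
        _ = 0 := by
            rw [hsum, ← Finset.sum_filter, ← hS, ← Finset.sum_mul, ← hs, h0]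
            ring
    have htriv' := hA u v' hu hsu hv'A hsum'
    apply hnt
    intro i
    by_cases hix : v i = x
    · have : univ.filter (fun j => v j = v i) = S := by rw [hS, hix]
      rw [this, ← hs, h0]
    · by_cases hia : v i = 1
      · have h1 := htriv' i
        have hvi' : v' i = 1 := by simp only [hv', if_neg hix]; exact hia
        have hfe : univ.filter (fun j => v' j = v' i)
            = S ∪ univ.filter (fun j => v j = v i) := by
          ext j
          simp only [mem_filter, mem_univ, true_and, mem_union, hvi', hS]
          by_cases hjx : v j = x
          · have hvj : v' j = 1 := by simp only [hv']; rw [if_pos hjx]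
            simp [hvj, hjx]
          · have hvj : v' j = v j := by simp only [hv']; rw [if_neg hjx]
            rw [hvj, hia]
            simp [hjx]
        have hdisj : Disjoint S (univ.filter (fun j => v j = v i)) := by
          rw [hS, Finset.disjoint_filter]
          intro j _ hjS hji
          exact hx1 (hjS.symm.trans (hji.trans hia))
        rw [hfe, Finset.sum_union hdisj, ← hs, h0, zero_add] at h1
        exact h1
      · have h1 := htriv' i
        have hvi' : v' i = v i := by simp only [hv', if_neg hix]
        have hfe : univ.filter (fun j => v' j = v' i)
            = univ.filter (fun j => v j = v i) := by
          ext j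
          simp only [mem_filter, mem_univ, true_and, hvi']
          by_cases hjx : v j = x
          · have hvj : v' j = 1 := by simp only [hv']; rw [if_pos hjx]
            rw [hvj]
            constructor
            · intro h; exact absurd h.symm hia
            · intro h; exact absurd (hjx.symm.trans h).symm hix
          · have hvj : v' j = v j := by simp only [hv']; rw [if_neg hjx]
            rw [hvj]
        rw [hfe] at h1
        exact h1
  -- |s| ≤ 4k
  have habs : |s| ≤ 4 * k := by
    calc |s| ≤ ∑ j ∈ S, |u j| := abs_sum_le_sum_abs _ _
      _ ≤ ∑ j : Fin 4, |u j| :=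
          sum_le_sum_of_subset_of_nonneg (subset_univ S) (fun j _ _ => abs_nonneg _)
      _ ≤ ∑ _j : Fin 4, k := sum_le_sum (fun j _ => hu j)
      _ = 4 * k := by simp [Finset.sum_const, Finset.card_univ]; try ring
  -- key equation
  have key : s * x + ∑ i, (if v i = x then 0 else u i * v i) = 0 := by
    have h1 : ∑ i, (if v i = x then u i * x else 0) = s * x := by
      rw [← Finset.sum_filter, ← hS, ← Finset.sum_mul]
    calc s * x + ∑ i, (if v i = x then 0 else u i * v i)
        = ∑ i, (if v i = x then u i * x else 0)
            + ∑ i, (if v i = x then 0 else u i * v i) := by rw [h1]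
      _ = ∑ i, ((if v i = x then u i * x else 0) + (if v i = x then 0 else u i * v i)) :=
          sum_add_distrib.symm
      _ = ∑ i, u i * v i := by
          refine sum_congr rfl (fun i _ => ?_)
          by_cases h : v i = x
          · rw [if_pos h, if_pos h, h]; ring
          · rw [if_neg h, if_neg h]; ring
      _ = 0 := hsum
  set t : Fin 3 → ℤ := fun j => if v (i₀.succAbove j) = x then 0 else u (i₀.succAbove j) with hT
  set b : Fin 3 → ℤ := fun j => if v (i₀.succAbove j) = x then 1 else v (i₀.succAbove j) with hB
  have hsum3 : ∑ j : Fin 3, t j * b j = ∑ i, (if v i = x then 0 else u i * v i) := by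
    rw [Fin.sum_univ_succAbove (fun i => if v i = x then 0 else u i * v i) i₀, if_pos hi₀,
      zero_add]
    refine sum_congr rfl (fun j _ => ?_)
    by_cases h : v (i₀.succAbove j) = x
    · simp [hT, hB, h]
    · simp [hT, hB, h]
  have key2 : s * x = -(t 0 * b 0 + t 1 * b 1 + t 2 * b 2) := by
    rw [← Fin.sum_univ_three (fun j => t j * b j), hsum3]
    linarith [key]
  have ht : ∀ j, -k ≤ t j ∧ t j ≤ k := by
    intro j
    by_cases h : v (i₀.succAbove j) = x
    · simp only [hT, if_pos h]; exact ⟨by linarith, hk0⟩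
    · simp only [hT, if_neg h]; exact abs_le.mp (hu _)
  have hb : ∀ j, b j ∈ A := by
    intro j
    by_cases h : v (i₀.succAbove j) = x
    · simp only [hB, if_pos h]; exact ha
    · simp only [hB, if_neg h]; exact hvA _ h
  rw [cand, Finset.mem_image]
  refine ⟨(s, (t 0, t 1, t 2), (b 0, b 1, b 2)), ?_, ?_⟩
  · simp only [Finset.mem_product, Finset.mem_Icc]
    obtain ⟨hs1, hs2⟩ := abs_le.mp habs
    exact ⟨⟨by linarith, hs2⟩, ⟨⟨(ht 0), (ht 1), (ht 2)⟩, ⟨hb 0, hb 1, hb 2⟩⟩⟩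
  · show (-(t 0 * b 0 + t 1 * b 1 + t 2 * b 2)) / s = x
    rw [← key2]
    exact Int.mul_ediv_cancel_left x hs0

lemma card_cand_le {k : ℤ} (hk : 1 ≤ k) (A : Finset ℤ) :
    ((cand k A).card : ℤ) ≤ (8*k+1) * (2*k+1)^3 * (A.card : ℤ)^3 := by
  have c1 : (((Finset.Icc (-(4*k)) (4*k)).card : ℤ)) = 8*k+1 := by
    rw [Int.card_Icc, Int.toNat_of_nonneg (by linarith)]; ring
  have c2 : (((Finset.Icc (-k) k).card : ℤ)) = 2*k+1 := by
    rw [Int.card_Icc, Int.toNat_of_nonneg (by linarith)]; ring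
  set B := (Finset.Icc (-(4*k)) (4*k)) ×ˢ
      ((Finset.Icc (-k) k ×ˢ Finset.Icc (-k) k ×ˢ Finset.Icc (-k) k) ×ˢ (A ×ˢ A ×ˢ A)) with hB
  calc ((cand k A).card : ℤ)
      ≤ (B.card : ℤ) := by
        exact_mod_cast Finset.card_image_le
    _ = (8*k+1) * (2*k+1)^3 * (A.card : ℤ)^3 := by
        rw [hB]
        simp only [Finset.card_product]
        push_cast
        rw [c1, c2]
        ring

lemma exists_not_bad {k : ℤ} {A : Finset ℤ} (hA : IsKFoldSidon k ↑A) (ha : (1:ℤ) ∈ A)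
    (p : ℤ) : ∃ n : ℕ, ¬ Bad k A (p + 1 + (n:ℤ)) := by
  by_contra h
  push_neg at h
  have hinf : (↑(cand k A) : Set ℤ).Infinite :=
    Set.infinite_of_injective_forall_mem (f := fun n : ℕ => p + 1 + (n:ℤ))
      (fun a b hab => by simpa using hab)
      (fun n => bad_mem_cand hA ha (h n))
  exact hinf (Finset.finite_toSet _)

open Classical in
noncomputable def nxt (k : ℤ) (A : Finset ℤ) (p : ℤ) : ℤ :=
  if h : ∃ n : ℕ, ¬ Bad k A (p + 1 + (n:ℤ)) then p + 1 + (Nat.find h : ℤ) else p + 1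

open Classical in
lemma nxt_spec {k : ℤ} {A : Finset ℤ} (hA : IsKFoldSidon k ↑A) (ha : (1:ℤ) ∈ A) (p : ℤ) :
    p < nxt k A p ∧ ¬ Bad k A (nxt k A p) ∧
      ∀ y, p < y → y < nxt k A p → Bad k A y := by
  have h := exists_not_bad hA ha p
  rw [nxt, dif_pos h]
  refine ⟨by linarith [Int.natCast_nonneg (Nat.find h)], Nat.find_spec h, ?_⟩
  intro y hy1 hy2
  have hj0 : (0:ℤ) ≤ y - (p+1) := by linarith
  set j : ℕ := (y - (p+1)).toNat with hjdef
  have hj : (j:ℤ) = y - (p+1) := Int.toNat_of_nonneg hj0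
  have hlt : j < Nat.find h := by
    have : (j:ℤ) < (Nat.find h : ℤ) := by linarith
    exact_mod_cast this
  have := Nat.find_min h hlt
  rw [not_not] at this
  have hy : p + 1 + (j:ℤ) = y := by linarith
  rwa [hy] at this

noncomputable def seqA (k : ℤ) : ℕ → ℤ × Finset ℤ
  | 0 => (1, {1})
  | m+1 => (nxt k (seqA k m).2 (seqA k m).1,
      insert (nxt k (seqA k m).2 (seqA k m).1) (seqA k m).2)

lemma seqA_inv (k : ℤ) (m : ℕ) :
    ((1:ℤ) ∈ (seqA k m).2) ∧
    ((seqA k m).2 = (Finset.range (m+1)).image (fun j => (seqA k j).1)) ∧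
    IsKFoldSidon k ↑(seqA k m).2 ∧
    (∀ y : ℤ, 1 < y → y ≤ (seqA k m).1 → y ∈ (seqA k m).2 ∨ Bad k (seqA k m).2 y) := by
  induction m with
  | zero =>
    refine ⟨by simp [seqA], by simp [seqA], ?_, ?_⟩
    · intro u v hu hsu hv hsum i
      have hvv : ∀ j, v j = v i := by
        intro j
        have h1 : v j = 1 := by simpa [seqA] using hv j
        have h2 : v i = 1 := by simpa [seqA] using hv i
        rw [h1, h2]
      have : Finset.univ.filter (fun j => v j = v i) = Finset.univ :=
        Finset.filter_true_of_mem (fun j _ => hvv j)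
      rw [this]
      exact hsu
    · intro y hy1 hy2
      simp only [seqA] at hy2
      linarith
  | succ m ih =>
    obtain ⟨h1, hima, hgood, hcov⟩ := ih
    have hspec := nxt_spec hgood h1 (seqA k m).1
    have hA2 : (seqA k (m+1)).2 = insert (nxt k (seqA k m).2 (seqA k m).1) (seqA k m).2 := rfl
    have hA1 : (seqA k (m+1)).1 = nxt k (seqA k m).2 (seqA k m).1 := rfl
    refine ⟨?_, ?_, ?_, ?_⟩
    · rw [hA2]; exact Finset.mem_insert_of_mem h1
    · rw [hA2, Finset.range_add_one, Finset.image_insert, ← hima, hA1]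
    · rw [hA2]; exact sidon_insert hgood hspec.2.1
    · intro y hy1 hy2
      rw [hA1] at hy2
      rw [hA2]
      rcases lt_or_ge (seqA k m).1 y with hc | hc
      · rcases eq_or_lt_of_le hy2 with he | hlt
        · exact Or.inl (he ▸ Finset.mem_insert_self _ _)
        · exact Or.inr (bad_mono (Finset.subset_insert _ _) (hspec.2.2 y hc hlt))
      · rcases hcov y hy1 hc with h | h
        · exact Or.inl (Finset.mem_insert_of_mem h)
        · exact Or.inr (bad_mono (Finset.subset_insert _ _) h)

lemma seqA_bound {k : ℤ} (hk : 1 ≤ k) (m : ℕ) :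
    (seqA k m).1 ≤ 2^8 * k^4 * ((m:ℤ)+1)^3 := by
  obtain ⟨h1, hima, hgood, hcov⟩ := seqA_inv k m
  set p := (seqA k m).1 with hp
  set A := (seqA k m).2 with hA
  have hsub : Finset.Ioc (1:ℤ) p ⊆ A ∪ cand k A := by
    intro y hy
    rw [Finset.mem_Ioc] at hy
    rcases hcov y hy.1 hy.2 with h | h
    · exact Finset.mem_union_left _ h
    · exact Finset.mem_union_right _ (bad_mem_cand hgood h1 h)
  have hcard1 : p - 1 ≤ ((Finset.Ioc (1:ℤ) p).card : ℤ) := by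
    rw [Int.card_Ioc]; exact Int.self_le_toNat _
  have hcard2 : ((Finset.Ioc (1:ℤ) p).card : ℤ) ≤ (A.card : ℤ) + ((cand k A).card : ℤ) := by
    exact_mod_cast le_trans (Finset.card_le_card hsub) (Finset.card_union_le _ _)
  have hAcard : (A.card : ℤ) ≤ (m:ℤ) + 1 := by
    rw [hima]
    calc (((Finset.range (m+1)).image (fun j => (seqA k j).1)).card : ℤ)
        ≤ ((Finset.range (m+1)).card : ℤ) := by exact_mod_cast Finset.card_image_le
      _ = (m:ℤ) + 1 := by simp
  have hcand := card_cand_le hk A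
  have hA0 : (0:ℤ) ≤ (A.card : ℤ) := Int.natCast_nonneg _
  have hA3 : (A.card : ℤ)^3 ≤ ((m:ℤ)+1)^3 := by
    exact pow_le_pow_left₀ hA0 hAcard 3
  have hm : (0:ℤ) ≤ (m:ℤ) := Int.natCast_nonneg m
  have hcoef : (0:ℤ) ≤ (8*k+1) * (2*k+1)^3 := by positivity
  have hstep : p ≤ 1 + ((m:ℤ)+1) + (8*k+1) * (2*k+1)^3 * ((m:ℤ)+1)^3 := by
    have := mul_le_mul_of_nonneg_left hA3 hcoef
    linarith
  have hM1 : (1:ℤ) ≤ (m:ℤ) + 1 := by linarith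
  have hM3 : ((m:ℤ)+1) ≤ ((m:ℤ)+1)^3 := by
    nlinarith [mul_nonneg (mul_nonneg hm (show (0:ℤ) ≤ (m:ℤ)+1 by linarith))
      (show (0:ℤ) ≤ (m:ℤ)+2 by linarith)]
  set X : ℤ := ((m:ℤ)+1)^3 with hX
  have hX0 : (0:ℤ) < X := pow_pos (by linarith) 3
  have c1 : (0:ℤ) ≤ k*(k-1) := mul_nonneg (by linarith) (by linarith)
  have c2 : (0:ℤ) ≤ k^2*(k-1) := mul_nonneg (by positivity) (by linarith)
  have c3 : (0:ℤ) ≤ k^3*(k-1) := mul_nonneg (by positivity) (by linarith)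
  have hk4 : (1:ℤ) ≤ k^4 := by nlinarith [c1, c2, c3]
  have hcoefb : (8*k+1)*(2*k+1)^3 ≤ 243 * k^4 := by nlinarith [c1, c2, c3]
  have hcX : (8*k+1)*(2*k+1)^3 * X ≤ 243 * (k^4 * X) := by
    have := mul_le_mul_of_nonneg_right hcoefb hX0.le
    linarith [this]
  have hXk : X ≤ k^4 * X := by nlinarith [mul_nonneg (show (0:ℤ) ≤ k^4 - 1 by linarith) hX0.le]
  have hfin : p ≤ 245 * (k^4 * X) := by linarith
  have hpos : (0:ℤ) ≤ k^4 * X := by positivity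
  calc p ≤ 245 * (k^4 * X) := hfin
    _ ≤ 256 * (k^4 * X) := by linarith
    _ = 2^8 * k^4 * X := by ring

/-- There is an infinite strictly increasing sequence `1 = a₀ < a₁ < ⋯` of integers
with `a m ≤ 2⁸ k⁴ (m+1)³` (i.e. the `m`-th term, counted from `1`, is at most
`2⁸ k⁴ m³`) whose range is a `k`-fold Sidon set. -/
theorem stmt4 (k : ℤ) (hk : 1 ≤ k) :
    ∃ a : ℕ → ℤ, a 0 = 1 ∧ StrictMono a ∧
      (∀ m : ℕ, a m ≤ 2 ^ 8 * k ^ 4 * ((m : ℤ) + 1) ^ 3) ∧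
      IsKFoldSidon k (Set.range a) := by
  refine ⟨fun m => (seqA k m).1, rfl, ?_, fun m => seqA_bound hk m, ?_⟩
  · apply strictMono_nat_of_lt_succ
    intro m
    obtain ⟨h1, _, hgood, _⟩ := seqA_inv k m
    exact (nxt_spec hgood h1 (seqA k m).1).1
  · intro u v hu hsu hv hsum
    choose n hn using fun i => Set.mem_range.mp (hv i)
    set M := Finset.univ.sup n with hM
    obtain ⟨h1, hima, hgood, _⟩ := seqA_inv k M
    refine hgood u v hu hsu (fun i => ?_) hsum
    show v i ∈ ((seqA k M).2 : Set ℤ)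
    rw [hima]
    rw [Finset.coe_image, Finset.coe_range]  -- maybe not needed
    exact ⟨n i, by simpa using Nat.lt_succ_of_le (Finset.le_sup (Finset.mem_univ i)), hn i⟩
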